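/- Every admissible sequence c = (c_1,…,c_n) with all c_j ≥ 2 admits a cyclic permutation (d_1,…,d_n) which is normalized, meaning either d_1 = d_2 = … = d_n, or d_1 is minimal among all d_j and d_n = d_1 + 1. -/

import Mathlib

/-- every admissible sequence with all entries `≥ 2` admits a
normalized cyclic permutation: either all entries of the rotated sequence are
equal, or its first entry is minimal and its last entry is the first plus one.
Here `c : Fin (n+1) → ℕ` is cyclically indexed, the admissibility conditions
being `2 ≤ c j` and `c j ≤ c (j+1) + 1` for all `j` (with wrap-around), and the
rotation by `k` is `d = fun j => c (j + k)`. -/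
theorem exists_normalized_cyclic_permutation (n : ℕ) (c : Fin (n + 1) → ℕ)
    (h2 : ∀ j, 2 ≤ c j)
    (hadm : ∀ j, c j ≤ c (j + 1) + 1) :
    ∃ k : Fin (n + 1),
      (∀ i j : Fin (n + 1), c (i + k) = c (j + k)) ∨
      ((∀ j : Fin (n + 1), c ((0 : Fin (n + 1)) + k) ≤ c (j + k)) ∧
        c (Fin.last n + k) = c ((0 : Fin (n + 1)) + k) + 1) := by
  obtain ⟨i0, hi0⟩ : ∃ i0, ∀ j, c i0 ≤ c j := Finite.exists_min c
  by_cases hconst : ∀ j, c j = c i0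
  · exact ⟨0, Or.inl fun i j => by rw [hconst (i + 0), hconst (j + 0)]⟩
  · -- find j with c j = min and c (j - 1) ≠ min
    by_cases hbad : ∃ j, c j = c i0 ∧ c (j - 1) ≠ c i0
    · obtain ⟨j, hj, hj1⟩ := hbad
      refine ⟨j, Or.inr ⟨fun jj => ?_, ?_⟩⟩
      · rw [zero_add, hj]; exact hi0 _
      · have hlast : Fin.last n + j = j - 1 := by
          have h1 : (Fin.last n : Fin (n + 1)) + 1 = 0 := by
            apply Fin.ext
            simp [Fin.add_def, Fin.last]
          have h2' : (Fin.last n + j) + 1 = j := by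
            rw [add_right_comm, h1, zero_add]
          rw [eq_sub_iff_add_eq, h2']
        rw [hlast, zero_add, hj]
        have ha := hadm (j - 1)
        rw [sub_add_cancel, hj] at ha
        have hge := hi0 (j - 1)
        omega
    · push_neg at hbad
      exfalso
      apply hconst
      intro j
      open Fin.NatCast in
      have key : ∀ t : ℕ, c (i0 - (t : Fin (n + 1))) = c i0 := by
        intro t
        induction t with
        | zero => simp
        | succ t ih =>
          have := hbad _ ih
          have heq : i0 - ((t + 1 : ℕ) : Fin (n + 1)) = i0 - (t : Fin (n + 1)) - 1 := by
            push_cast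
            rw [sub_sub]
          rw [heq, this]
      have := key (i0 - j).val
      rwa [Fin.cast_val_eq_self, sub_sub_cancel] at this
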